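/- For the PPDG iterates, for every k ≥ 1 one has L(x^{k+1}, y^{k+1}) ≤ L(x^k, y^k) - (1/α - L/2)‖x^{k+1} - x^k‖² + ⟨y^{k+1} - y^k, α A(∇f(x^{k-1}) - ∇f(x^k))⟩. -/

import Mathlib

open RealInnerProductSpace
noncomputable section

theorem descent_lemma
    {X : Type*} [NormedAddCommGroup X] [InnerProductSpace ℝ X] [CompleteSpace X]
    (f : X → ℝ) (f' : X → X) (hf : ∀ p, HasGradientAt f (f' p) p)
    (Lf : ℝ) (hLip : ∀ p q, ‖f' p - f' q‖ ≤ Lf * ‖p - q‖)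
    (p q : X) : f q ≤ f p + ⟪f' p, q - p⟫ + Lf/2 * ‖q - p‖^2 := by
  set d := q - p with hd
  set φ : ℝ → ℝ := fun t => f (p + t • d) - t * ⟪f' p, d⟫ - Lf/2 * t^2 * ‖d‖^2 with hφ
  have hline : ∀ t : ℝ, HasDerivAt (fun t : ℝ => p + t • d) d t := by
    intro t
    simpa using ((hasDerivAt_id t).smul_const d).const_add p
  have hgd : ∀ t : ℝ, HasDerivAt (fun t => f (p + t • d)) ⟪f' (p + t • d), d⟫ t := by
    intro t
    have h1 := ((hf (p + t • d)).hasFDerivAt).comp_hasDerivAt t (hline t)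
    simpa [Function.comp_def] using h1
  have hφd : ∀ t : ℝ, HasDerivAt φ (⟪f' (p + t • d), d⟫ - ⟪f' p, d⟫ - Lf * t * ‖d‖^2) t := by
    intro t
    have h2 : HasDerivAt (fun t : ℝ => t * ⟪f' p, d⟫) ⟪f' p, d⟫ t := by
      simpa using (hasDerivAt_id t).mul_const ⟪f' p, d⟫
    have h3 : HasDerivAt (fun t : ℝ => Lf/2 * t^2 * ‖d‖^2) (Lf * t * ‖d‖^2) t := by
      have := ((hasDerivAt_pow 2 t).const_mul (Lf/2)).mul_const (‖d‖^2)
      refine this.congr_deriv ?_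
      push_cast; ring
    exact ((hgd t).sub h2).sub h3
  have key : φ 1 ≤ φ 0 := by
    have hmono : AntitoneOn φ (Set.Icc 0 1) := by
      apply antitoneOn_of_deriv_nonpos (convex_Icc 0 1)
      · exact fun t _ => ((hφd t).continuousAt).continuousWithinAt
      · intro t ht
        exact ((hφd t).differentiableAt).differentiableWithinAt
      · intro t ht
        rw [interior_Icc] at ht
        rw [(hφd t).deriv]
        have h5 : ⟪f' (p + t • d) - f' p, d⟫ ≤ Lf * t * ‖d‖^2 := by
          calc ⟪f' (p + t • d) - f' p, d⟫ ≤ ‖f' (p + t • d) - f' p‖ * ‖d‖ :=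
                real_inner_le_norm _ _
            _ ≤ (Lf * ‖(p + t • d) - p‖) * ‖d‖ := by
                have := hLip (p + t • d) p
                nlinarith [norm_nonneg d]
            _ = Lf * t * ‖d‖^2 := by
                rw [add_sub_cancel_left, norm_smul, Real.norm_eq_abs,
                  abs_of_pos ht.1]; ring
        rw [inner_sub_left] at h5
        linarith
    exact hmono (by norm_num) (by norm_num) (by norm_num)
  simp only [hφ, one_smul, zero_smul, add_zero, one_pow] at key
  have : p + d = q := by rw [hd]; abel
  rw [this] at key
  linarith


theorem limit_aux (C R : ℝ) (hC : 0 ≤ C)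
    (h : ∀ t : ℝ, 0 < t → t ≤ 1 → 0 ≤ R + C * t) : 0 ≤ R := by
  by_contra hcon
  push_neg at hcon
  have hden : 0 < C + 1 := by linarith
  have ht0 : 0 < min 1 (-R / (2 * (C + 1))) :=
    lt_min one_pos (div_pos (by linarith) (by linarith))
  have := h _ ht0 (min_le_left _ _)
  have ht2 : min 1 (-R / (2 * (C + 1))) ≤ -R / (2 * (C + 1)) := min_le_right _ _
  have hb : C * min 1 (-R / (2 * (C + 1))) ≤ C * (-R / (2 * (C + 1))) :=
    mul_le_mul_of_nonneg_left ht2 hC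
  have hb2 : C * (-R / (2 * (C + 1))) ≤ -R / 2 := by
    rw [mul_div_assoc' , div_le_div_iff₀ (by linarith) (by norm_num : (0:ℝ) < 2)]
    nlinarith
  linarith

theorem strong_min
    {X : Type*} [NormedAddCommGroup X] [InnerProductSpace ℝ X] [FiniteDimensional ℝ X]
    {Y : Type*} [NormedAddCommGroup Y] [InnerProductSpace ℝ Y] [FiniteDimensional ℝ Y]
    (A : X →L[ℝ] Y) (hs : Y → ℝ) (hconv : ConvexOn ℝ Set.univ hs)
    (α : ℝ) (hα : 0 < α) (c : X) (y0 b : Y)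
    (hmin : ∀ w : Y,
      hs b - ⟪b, A c⟫ + (1/2) * ⟪α • A ((ContinuousLinearMap.adjoint A) (b - y0)), b - y0⟫
      ≤ hs w - ⟪w, A c⟫ + (1/2) * ⟪α • A ((ContinuousLinearMap.adjoint A) (w - y0)), w - y0⟫) :
    ∀ w : Y, hs b - ⟪b, A c⟫ + (α/2) * ‖(ContinuousLinearMap.adjoint A) (b - y0)‖^2
        + (α/2) * ‖(ContinuousLinearMap.adjoint A) (w - b)‖^2
      ≤ hs w - ⟪w, A c⟫ + (α/2) * ‖(ContinuousLinearMap.adjoint A) (w - y0)‖^2 := by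
  have hq : ∀ z : Y, ⟪α • A ((ContinuousLinearMap.adjoint A) z), z⟫
      = α * ‖(ContinuousLinearMap.adjoint A) z‖^2 := by
    intro z
    rw [real_inner_smul_left, real_inner_comm, ← ContinuousLinearMap.adjoint_inner_left,
      real_inner_self_eq_norm_sq]
  intro w
  set a := (ContinuousLinearMap.adjoint A) (b - y0) with ha
  set c' := (ContinuousLinearMap.adjoint A) (w - b) with hc'
  have hsplit : (ContinuousLinearMap.adjoint A) (w - y0) = a + c' := by
    rw [ha, hc', ← map_add]; congr 1; abel
  -- key inequality for all t ∈ (0,1]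
  have hkey : ∀ t : ℝ, 0 < t → t ≤ 1 →
      0 ≤ hs w - hs b - ⟪w - b, A c⟫ + α * ⟪a, c'⟫ + (α/2) * ‖c'‖^2 * t := by
    intro t ht0 ht1
    have hmt := hmin (b + t • (w - b))
    rw [hq, hq] at hmt
    have hcomb : hs (b + t • (w - b)) ≤ (1 - t) * hs b + t * hs w := by
      have := hconv.2 (Set.mem_univ b) (Set.mem_univ w) (by linarith : (0:ℝ) ≤ 1 - t)
        (le_of_lt ht0) (by ring)
      have heq : (1 - t) • b + t • w = b + t • (w - b) := by
        module
      rw [heq] at this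
      simpa using this
    have hlin : ⟪b + t • (w - b), A c⟫ = ⟪b, A c⟫ + t * ⟪w - b, A c⟫ := by
      rw [inner_add_left, real_inner_smul_left]
    have hquad : ‖(ContinuousLinearMap.adjoint A) (b + t • (w - b) - y0)‖^2
        = ‖a‖^2 + 2 * t * ⟪a, c'⟫ + t^2 * ‖c'‖^2 := by
      have : (ContinuousLinearMap.adjoint A) (b + t • (w - b) - y0) = a + t • c' := by
        rw [ha, hc', ← map_smul, ← map_add]; congr 1; abel
      rw [this, ← real_inner_self_eq_norm_sq, ← real_inner_self_eq_norm_sq,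
        ← real_inner_self_eq_norm_sq, inner_add_add_self]
      simp only [real_inner_smul_left, real_inner_smul_right]
      rw [real_inner_comm c' a]
      ring
    rw [hlin, hquad] at hmt
    have h6 : hs b ≤ (1 - t) * hs b + t * hs w - t * ⟪w - b, A c⟫
        + (α/2) * (2 * t * ⟪a, c'⟫ + t^2 * ‖c'‖^2) := by nlinarith [hmt, hcomb]
    have h7 : 0 ≤ t * (hs w - hs b - ⟪w - b, A c⟫ + α * ⟪a, c'⟫ + (α/2) * ‖c'‖^2 * t) := by
      nlinarith [h6]
    have := nonneg_of_mul_nonneg_right h7 ht0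
    linarith [this]
  have hR : 0 ≤ hs w - hs b - ⟪w - b, A c⟫ + α * ⟪a, c'⟫ := by
    apply limit_aux ((α/2) * ‖c'‖^2) _ (by positivity)
    intro t ht0 ht1
    exact hkey t ht0 ht1
  have hns : ‖a + c'‖^2 = ‖a‖^2 + 2 * ⟪a, c'⟫ + ‖c'‖^2 := by
    rw [← real_inner_self_eq_norm_sq, ← real_inner_self_eq_norm_sq,
      ← real_inner_self_eq_norm_sq, inner_add_add_self, real_inner_comm c' a]; ring
  rw [hsplit, hns]
  have hexp : ⟪w, A c⟫ = ⟪b, A c⟫ + ⟪w - b, A c⟫ := by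
    rw [← inner_add_left]; congr 1; abel
  rw [hexp]
  have h9 : (α/2) * (‖a‖^2 + 2 * ⟪a, c'⟫ + ‖c'‖^2)
      = (α/2) * ‖a‖^2 + α * ⟪a, c'⟫ + (α/2) * ‖c'‖^2 := by ring
  have h10 : (α/2) * (‖a‖^2 + 2 * ⟪a, c'⟫ + ‖c'‖^2) = (α/2) * (‖a‖^2 + 2 * ⟪a, c'⟫ + ‖c'‖^2) := rfl
  linarith [h9, hR]


/-- descent-type recursion for the Lagrangian along PPDG iterates. -/
theorem stmt1
    {X : Type*} [NormedAddCommGroup X] [InnerProductSpace ℝ X] [FiniteDimensional ℝ X]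
    {Y : Type*} [NormedAddCommGroup Y] [InnerProductSpace ℝ Y] [FiniteDimensional ℝ Y]
    (A : X →L[ℝ] Y) (hA : Function.Surjective A)
    (f : X → ℝ) (f' : X → X) (hf : ∀ p, HasGradientAt f (f' p) p)
    (Lf : ℝ) (hLf : 0 < Lf) (hLip : ∀ p q, ‖f' p - f' q‖ ≤ Lf * ‖p - q‖)
    (hs : Y → ℝ) (hconv : ConvexOn ℝ Set.univ hs)
    (hbdd : ∀ w : Y, BddBelow (Set.range fun p : X => f p + ⟪w, A p⟫ - hs w))
    (α : ℝ) (hα : 0 < α)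
    (x : ℕ → X) (y : ℕ → Y)
    (hxiter : ∀ k : ℕ,
      x (k+1) = x k - α • (f' (x k) + (ContinuousLinearMap.adjoint A) (y k)))
    (hyiter : ∀ k : ℕ, ∀ w : Y,
      hs (y (k+1)) - ⟪y (k+1), A ((2:ℝ) • x (k+1) - x k)⟫
        + (1/2) * ⟪α • A ((ContinuousLinearMap.adjoint A) (y (k+1) - y k)), y (k+1) - y k⟫
      ≤ hs w - ⟪w, A ((2:ℝ) • x (k+1) - x k)⟫
        + (1/2) * ⟪α • A ((ContinuousLinearMap.adjoint A) (w - y k)), w - y k⟫) :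
    ∀ k : ℕ, 1 ≤ k →
      f (x (k+1)) + ⟪y (k+1), A (x (k+1))⟫ - hs (y (k+1))
        ≤ (f (x k) + ⟪y k, A (x k)⟫ - hs (y k))
          - (1/α - Lf/2) * ‖x (k+1) - x k‖^2
          + ⟪y (k+1) - y k, α • A (f' (x (k-1)) - f' (x k))⟫ := by
  intro k hk
  obtain ⟨m, rfl⟩ : ∃ m, k = m + 1 := ⟨k - 1, (Nat.succ_pred_eq_of_pos hk).symm⟩
  simp only [Nat.add_sub_cancel]
  set At := ContinuousLinearMap.adjoint A with hAT
  set x0 := x m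
  set x1 := x (m+1)
  set x2 := x (m+1+1)
  set y0 := y m
  set y1 := y (m+1)
  set y2 := y (m+1+1)
  set c : X := (2:ℝ) • x1 - x0 with hc
  set a := At (y2 - y1) with hadef
  set bb := At (y1 - y0) with hbbdef
  -- descent lemma
  have hA1 : f x2 ≤ f x1 + ⟪f' x1, x2 - x1⟫ + Lf/2 * ‖x2 - x1‖^2 :=
    descent_lemma f f' hf Lf hLip x1 x2
  -- gradient step identities
  have hd1 : x2 - x1 = -(α • (f' x1 + At y1)) := by
    show x (m+1+1) - x (m+1) = -(α • (f' (x (m+1)) + At (y (m+1))))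
    rw [hxiter (m+1)]; abel
  have hd0 : x1 - x0 = -(α • (f' x0 + At y0)) := by
    show x (m+1) - x m = -(α • (f' (x m) + At (y m)))
    rw [hxiter m]; abel
  have hg1 : f' x1 + At y1 = (1/α) • (x1 - x2) := by
    have h : x1 - x2 = α • (f' x1 + At y1) := by
      show x (m+1) - x (m+1+1) = α • (f' (x (m+1)) + At (y (m+1)))
      rw [hxiter (m+1)]; abel
    rw [h, smul_smul, one_div, inv_mul_cancel₀ hα.ne', one_smul]
  have hip : ⟪f' x1, x2 - x1⟫ = -(1/α) * ‖x2 - x1‖^2 - ⟪y1, A x2⟫ + ⟪y1, A x1⟫ := by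
    have hf1 : f' x1 = (1/α) • (x1 - x2) - At y1 := by rw [← hg1]; abel
    rw [hf1, inner_sub_left, real_inner_smul_left, hAT,
      ContinuousLinearMap.adjoint_inner_left,
      show x1 - x2 = -(x2 - x1) from by abel, inner_neg_left,
      real_inner_self_eq_norm_sq, map_sub, inner_sub_right]
    ring
  -- strong minimality at step m, evaluated at y2
  have hsm := strong_min A hs hconv α hα c y0 y1 (hyiter m) y2
  have hsplit2 : At (y2 - y0) = a + bb := by
    rw [hadef, hbbdef, ← map_add]; congr 1; abel
  have hns2 : ‖a + bb‖^2 = ‖a‖^2 + 2 * ⟪a, bb⟫ + ‖bb‖^2 := by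
    rw [← real_inner_self_eq_norm_sq, ← real_inner_self_eq_norm_sq,
      ← real_inner_self_eq_norm_sq, inner_add_add_self, real_inner_comm bb a]; ring
  have hstar : hs y1 - hs y2 ≤ ⟪y1, A c⟫ - ⟪y2, A c⟫ + α * ⟪a, bb⟫ := by
    rw [← hAT] at hsm
    rw [hsplit2, hns2] at hsm
    have h9 : (α/2) * (‖a‖^2 + 2 * ⟪a, bb⟫ + ‖bb‖^2)
        = (α/2) * ‖a‖^2 + α * ⟪a, bb⟫ + (α/2) * ‖bb‖^2 := by ring
    nlinarith [hsm, sq_nonneg ‖a‖]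
  -- cross-term identity
  have hxx : x2 - c = α • (f' x0 - f' x1) - α • (At y1 - At y0) := by
    have h : x2 - c = (x2 - x1) - (x1 - x0) := by rw [hc, two_smul]; abel
    rw [h, hd1, hd0]
    module
  have hcross : ⟪y2 - y1, A x2⟫ - ⟪y2 - y1, A c⟫
      = ⟪y2 - y1, α • A (f' x0 - f' x1)⟫ - α * ⟪a, bb⟫ := by
    rw [← inner_sub_right, ← map_sub, hxx, map_sub, inner_sub_right, map_smul, map_smul,
      real_inner_smul_right (y2 - y1) (A (At y1 - At y0)) α, ← map_sub At y1 y0,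
      ← ContinuousLinearMap.adjoint_inner_left A, ← hAT, ← hadef, ← hbbdef]
  have hsub1 : ⟪y2 - y1, A x2⟫ = ⟪y2, A x2⟫ - ⟪y1, A x2⟫ := inner_sub_left _ _ _
  have hsub2 : ⟪y2 - y1, A c⟫ = ⟪y2, A c⟫ - ⟪y1, A c⟫ := inner_sub_left _ _ _
  have hq2 : (1/α - Lf/2) * ‖x2 - x1‖^2
      = (1/α) * ‖x2 - x1‖^2 - Lf/2 * ‖x2 - x1‖^2 := by ring
  linarith [hA1, hip, hstar, hcross, hsub1, hsub2, hq2]
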